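/- With the acoustic geometry setup below, the inverse foliation density satisfies the transport equation Lμ = c^{−1}(Lc)·μ − c·(Tc) on U. -/

import Mathlib

noncomputable section

open scoped BigOperators

/-- Points of ℝ⁴ with coordinates (x⁰,x¹,x²,x³) = (t,x¹,x²,x³). -/
abbrev Pt : Type := Fin 4 → ℝ

/-- Partial derivative ∂_α f. -/
def pd (f : Pt → ℝ) (α : Fin 4) (x : Pt) : ℝ :=
  fderiv ℝ f x (Pi.single α 1)


lemma pd_add {f g : Pt → ℝ} {x : Pt} (hf : DifferentiableAt ℝ f x)
    (hg : DifferentiableAt ℝ g x) (α : Fin 4) :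
    pd (fun y => f y + g y) α x = pd f α x + pd g α x := by
  simp [pd, fderiv_fun_add hf hg]

lemma pd_neg {f : Pt → ℝ} {x : Pt} (α : Fin 4) :
    pd (fun y => -f y) α x = -pd f α x := by
  simp [pd, fderiv_neg]

lemma pd_mul {f g : Pt → ℝ} {x : Pt} (hf : DifferentiableAt ℝ f x)
    (hg : DifferentiableAt ℝ g x) (α : Fin 4) :
    pd (fun y => f y * g y) α x = f x * pd g α x + g x * pd f α x := by
  simp [pd, fderiv_fun_mul hf hg]

lemma pd_inv {f : Pt → ℝ} {x : Pt} (hf : DifferentiableAt ℝ f x) (h0 : f x ≠ 0) (α : Fin 4) :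
    pd (fun y => (f y)⁻¹) α x = -((f x)⁻¹ * pd f α x * (f x)⁻¹) := by
  have h : HasFDerivAt (fun y => (f y)⁻¹)
      ((-ContinuousLinearMap.mulLeftRight ℝ ℝ (f x)⁻¹ (f x)⁻¹).comp (fderiv ℝ f x)) x :=
    (hasFDerivAt_inv' (𝕜 := ℝ) h0).comp x hf.hasFDerivAt
  rw [pd, h.fderiv]
  simp [ContinuousLinearMap.mulLeftRight_apply, pd]

lemma pd_sq {f : Pt → ℝ} {x : Pt} (hf : DifferentiableAt ℝ f x) (α : Fin 4) :
    pd (fun y => (f y)^2) α x = 2 * f x * pd f α x := by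
  have e : (fun y => (f y)^2) = fun y => f y * f y := by funext y; ring
  rw [e, pd_mul hf hf]; ring

/-- The acoustic metric g = diag(−c², 1, 1, 1). -/
def gMat (c : Pt → ℝ) (α β : Fin 4) (x : Pt) : ℝ :=
  if α = β then (if α = 0 then -(c x) ^ 2 else 1) else 0

/-- The inverse metric g⁻¹ = diag(−c⁻², 1, 1, 1). -/
def gInv (c : Pt → ℝ) (α β : Fin 4) (x : Pt) : ℝ :=
  if α = β then (if α = 0 then -((c x) ^ 2)⁻¹ else 1) else 0

/-- Vf = V^α ∂_α f. -/
def vApp (V : Pt → Fin 4 → ℝ) (f : Pt → ℝ) (x : Pt) : ℝ :=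
  ∑ α, V x α * pd f α x

/-- g(V, W) = g_{αβ} V^α W^β. -/
def gPair (c : Pt → ℝ) (V W : Pt → Fin 4 → ℝ) (x : Pt) : ℝ :=
  ∑ α, ∑ β, gMat c α β x * V x α * W x β

/-- L̂^α = −g^{αβ}∂_β u. -/
def Lhat (c u : Pt → ℝ) (x : Pt) (α : Fin 4) : ℝ :=
  -∑ β, gInv c α β x * pd u β x

/-- The inverse foliation density μ = 1/(c⁻²∂_t u). -/
def invDens (c u : Pt → ℝ) (x : Pt) : ℝ :=
  (((c x) ^ 2)⁻¹ * pd u 0 x)⁻¹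

/-- L = μ L̂  (so L⁰ = 1). -/
def Lvec (c u : Pt → ℝ) (x : Pt) (α : Fin 4) : ℝ :=
  invDens c u x * Lhat c u x α

/-- T̂ = c⁻¹(∂_t − L). -/
def That (c u : Pt → ℝ) (x : Pt) (α : Fin 4) : ℝ :=
  (c x)⁻¹ * ((if α = 0 then 1 else 0) - Lvec c u x α)

/-- T = c⁻¹ μ T̂. -/
def Tvec (c u : Pt → ℝ) (x : Pt) (α : Fin 4) : ℝ :=
  (c x)⁻¹ * invDens c u x * That c u x α

/-- L̄ = c⁻²μ L + 2T. -/
def Lbar (c u : Pt → ℝ) (x : Pt) (α : Fin 4) : ℝ :=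
  ((c x) ^ 2)⁻¹ * invDens c u x * Lvec c u x α + 2 * Tvec c u x α

/-- The induced inverse metric ĝ^{αβ} = g^{αβ} + (2μ)⁻¹(L^αL̄^β + L̄^αL^β). -/
def ghat (c u : Pt → ℝ) (α β : Fin 4) (x : Pt) : ℝ :=
  gInv c α β x + (2 * invDens c u x)⁻¹ *
    (Lvec c u x α * Lbar c u x β + Lbar c u x α * Lvec c u x β)

set_option maxHeartbeats 2000000 in
/-- Equation (2.38) of Lemma 2.10: the transport equation Lμ = c⁻¹(Lc)μ − c(Tc). -/
theorem transport_equation_of_mu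
    (U : Set Pt) (hU : IsOpen U) (c u : Pt → ℝ)
    (hc : ContDiffOn ℝ (⊤ : ℕ∞) c U) (hcpos : ∀ x ∈ U, 0 < c x)
    (hu : ContDiffOn ℝ (⊤ : ℕ∞) u U)
    (heik : ∀ x ∈ U, ∑ α, ∑ β, gInv c α β x * pd u α x * pd u β x = 0)
    (hut : ∀ x ∈ U, 0 < pd u 0 x) :
    ∀ x ∈ U,
      vApp (Lvec c u) (invDens c u) x
        = (c x)⁻¹ * vApp (Lvec c u) c x * invDens c u x
          - c x * vApp (Tvec c u) c x := by
  intro x hx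
  have hxU : U ∈ nhds x := hU.mem_nhds hx
  have hc0 : c x ≠ 0 := ne_of_gt (hcpos x hx)
  have hp0 : pd u 0 x ≠ 0 := ne_of_gt (hut x hx)
  have hcd : DifferentiableAt ℝ c x :=
    ((hc x hx).differentiableWithinAt (by simp)).differentiableAt hxU
  have hu2 : ContDiffAt ℝ (⊤ : ℕ∞) u x := (hu x hx).contDiffAt hxU
  have htop2 : (2 : WithTop ℕ∞) ≤ ((⊤:ℕ∞) : WithTop ℕ∞) := by
    have h := WithTop.coe_le_coe.mpr (le_top : (2:ℕ∞) ≤ ⊤); simpa using h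
  have htop11 : ((1:WithTop ℕ∞) + 1) ≤ ((⊤:ℕ∞) : WithTop ℕ∞) := by
    have h := WithTop.coe_le_coe.mpr (le_top : ((1:ℕ∞)+1) ≤ ⊤); simpa using h
  have hfd : DifferentiableAt ℝ (fderiv ℝ u) x := by
    have := hu2.fderiv_right (m := 1) htop11
    exact this.differentiableAt one_ne_zero
  have hud : ∀ β : Fin 4, DifferentiableAt ℝ (pd u β) x := by
    intro β
    exact hfd.clm_apply (differentiableAt_const _)
  -- second derivative in terms of full second fderiv
  have hpd2 : ∀ α β : Fin 4, pd (pd u β) α x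
      = fderiv ℝ (fderiv ℝ u) x (Pi.single α 1) (Pi.single β 1) := by
    intro α β
    have h := fderiv_clm_apply (x := x) hfd (differentiableAt_const (Pi.single β 1 : Pt))
    have e : pd (pd u β) α x
        = fderiv ℝ (fun y => fderiv ℝ u y (Pi.single β 1)) x (Pi.single α 1) := rfl
    rw [e, h]
    simp
  have hsym : ∀ i : Fin 4, pd (pd u 0) i x = pd (pd u i) 0 x := by
    intro i
    have hs : IsSymmSndFDerivAt ℝ u x := by
      apply ContDiffAt.isSymmSndFDerivAt (n := ((⊤:ℕ∞) : WithTop ℕ∞)) hu2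
      simpa [minSmoothness_of_isRCLikeNormedField] using htop2
    rw [hpd2, hpd2, hs.eq]
  -- differentiability of building blocks
  have hsq : DifferentiableAt ℝ (fun y => (c y)^2) x := hcd.pow 2
  have hsq0 : (c x)^2 ≠ 0 := pow_ne_zero 2 hc0
  have hsqi : DifferentiableAt ℝ (fun y => ((c y)^2)⁻¹) x := hsq.inv hsq0
  have hwdiff : DifferentiableAt ℝ (fun y => ((c y)^2)⁻¹ * pd u 0 y) x := hsqi.mul (hud 0)
  have hw0 : ((c x)^2)⁻¹ * pd u 0 x ≠ 0 := mul_ne_zero (inv_ne_zero hsq0) hp0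
  -- derivative of the inverse foliation density
  have hdmu : ∀ α : Fin 4, pd (invDens c u) α x =
      -((((c x)^2)⁻¹ * pd u 0 x)⁻¹ *
        (((c x)^2)⁻¹ * pd (pd u 0) α x +
          pd u 0 x * (-(((c x)^2)⁻¹ * (2 * c x * pd c α x) * ((c x)^2)⁻¹))) *
        (((c x)^2)⁻¹ * pd u 0 x)⁻¹) := by
    intro α
    have e : pd (invDens c u) α x
        = pd (fun y => ((fun y => ((c y)^2)⁻¹ * pd u 0 y) y)⁻¹) α x := rfl
    rw [e, pd_inv hwdiff hw0]
    rw [show pd (fun y => ((c y)^2)⁻¹ * pd u 0 y) α x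
        = ((c x)^2)⁻¹ * pd (pd u 0) α x + pd u 0 x * pd (fun y => ((c y)^2)⁻¹) α x
        from pd_mul hsqi (hud 0) α]
    rw [show pd (fun y => ((c y)^2)⁻¹) α x
        = -(((c x)^2)⁻¹ * pd (fun y => (c y)^2) α x * ((c x)^2)⁻¹) from pd_inv hsq hsq0 α]
    rw [pd_sq hcd]
  -- derivative of the eikonal equation in the time direction
  have heik' : ∀ y ∈ U, -(((c y)^2)⁻¹ * (pd u 0 y * pd u 0 y))
      + (pd u 1 y * pd u 1 y + (pd u 2 y * pd u 2 y + pd u 3 y * pd u 3 y)) = 0 := by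
    intro y hy
    have h := heik y hy
    simp [gInv, Fin.sum_univ_four] at h
    linarith
  have hF0 : pd (fun y => -(((c y)^2)⁻¹ * (pd u 0 y * pd u 0 y))
      + (pd u 1 y * pd u 1 y + (pd u 2 y * pd u 2 y + pd u 3 y * pd u 3 y))) 0 x = 0 := by
    have hev : (fun y => -(((c y)^2)⁻¹ * (pd u 0 y * pd u 0 y))
        + (pd u 1 y * pd u 1 y + (pd u 2 y * pd u 2 y + pd u 3 y * pd u 3 y)))
        =ᶠ[nhds x] (fun _ => (0:ℝ)) := by
      filter_upwards [hxU] with y hy using heik' y hy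
    rw [pd, hev.fderiv_eq]
    simp
  have hS : DifferentiableAt ℝ (fun y => ((c y)^2)⁻¹ * (pd u 0 y * pd u 0 y)) x :=
    hsqi.mul ((hud 0).mul (hud 0))
  have E2 : -(((c x)^2)⁻¹ * (pd u 0 x * pd (pd u 0) 0 x + pd u 0 x * pd (pd u 0) 0 x)
        + (pd u 0 x * pd u 0 x) * (-(((c x)^2)⁻¹ * (2 * c x * pd c 0 x) * ((c x)^2)⁻¹)))
      + ((pd u 1 x * pd (pd u 1) 0 x + pd u 1 x * pd (pd u 1) 0 x)
        + ((pd u 2 x * pd (pd u 2) 0 x + pd u 2 x * pd (pd u 2) 0 x)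
          + (pd u 3 x * pd (pd u 3) 0 x + pd u 3 x * pd (pd u 3) 0 x))) = 0 := by
    have h := hF0
    rw [pd_add (hS.fun_neg) (((hud 1).fun_mul (hud 1)).fun_add (((hud 2).fun_mul (hud 2)).fun_add ((hud 3).fun_mul (hud 3))))] at h
    rw [pd_neg] at h
    rw [pd_mul hsqi ((hud 0).fun_mul (hud 0))] at h
    rw [pd_mul (hud 0) (hud 0)] at h
    rw [pd_add ((hud 1).fun_mul (hud 1)) (((hud 2).fun_mul (hud 2)).fun_add ((hud 3).fun_mul (hud 3)))] at h
    rw [pd_add ((hud 2).fun_mul (hud 2)) ((hud 3).fun_mul (hud 3))] at h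
    rw [pd_mul (hud 1) (hud 1), pd_mul (hud 2) (hud 2), pd_mul (hud 3) (hud 3)] at h
    rw [show pd (fun y => ((c y)^2)⁻¹) 0 x
        = -(((c x)^2)⁻¹ * pd (fun y => (c y)^2) 0 x * ((c x)^2)⁻¹) from pd_inv hsq hsq0 0] at h
    rw [pd_sq hcd] at h
    linarith
  have hE1 := heik' x hx
  simp only [vApp, Fin.sum_univ_four]
  simp only [hdmu, hsym]
  simp only [Lvec, Lhat, Tvec, That, invDens, gInv, Fin.sum_univ_four]
  simp only [(by decide : ((0:Fin 4) = 1) = False), (by decide : ((0:Fin 4) = 2) = False), (by decide : ((0:Fin 4) = 3) = False), (by decide : ((1:Fin 4) = 0) = False), (by decide : ((1:Fin 4) = 2) = False), (by decide : ((1:Fin 4) = 3) = False), (by decide : ((2:Fin 4) = 0) = False), (by decide : ((2:Fin 4) = 1) = False), (by decide : ((2:Fin 4) = 3) = False), (by decide : ((3:Fin 4) = 0) = False), (by decide : ((3:Fin 4) = 1) = False), (by decide : ((3:Fin 4) = 2) = False), if_false, if_true]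
  norm_num
  field_simp at E2 ⊢
  set b := c x with hb
  set p := pd u 0 x with hpp
  set q1 := pd u 1 x; set q2 := pd u 2 x; set q3 := pd u 3 x
  set a0 := pd c 0 x; set a1 := pd c 1 x; set a2 := pd c 2 x; set a3 := pd c 3 x
  set s0 := pd (pd u 0) 0 x; set s1 := pd (pd u 1) 0 x; set s2 := pd (pd u 2) 0 x; set s3 := pd (pd u 3) 0 x
  linear_combination E2 / 2
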